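/- For any sequence (h_k)_{k≥1} of real numbers with μ + Σ_{k=1}^∞ |h_k| ≤ 2 where 0 ≤ μ < 1, and any sequence (a_n) with |a_n| ≤ μ for all n, define recursively w_n = Σ_{k=1}^n h_k v_{n-k} + a_n, q_n = sign(w_n) (with sign(0)=1), v_n = w_n − q_n. Then |v_n| ≤ 1 for all n ≥ 0. -/

import Mathlib

/-- boundedness `|v n| ≤ 1` for the quantization recursion. -/
theorem v_bounded (μ : ℝ) (hμ0 : 0 ≤ μ) (hμ1 : μ < 1)
    (h a w q v : ℕ → ℝ)
    (hsum : Summable fun k => |h (k + 1)|)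
    (hnorm : μ + ∑' k : ℕ, |h (k + 1)| ≤ 2)
    (ha : ∀ n, |a n| ≤ μ)
    (hw : ∀ n, w n = (∑ k ∈ Finset.Icc 1 n, h k * v (n - k)) + a n)
    (hq : ∀ n, q n = if 0 ≤ w n then 1 else -1)
    (hv : ∀ n, v n = w n - q n) :
    ∀ n, |v n| ≤ 1 := by
  intro n
  induction n using Nat.strong_induction_on with
  | _ n ih =>
    have hwbound : |w n| ≤ 2 := by
      rw [hw n]
      calc |(∑ k ∈ Finset.Icc 1 n, h k * v (n - k)) + a n|
          ≤ |∑ k ∈ Finset.Icc 1 n, h k * v (n - k)| + |a n| := abs_add_le _ _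
        _ ≤ (∑ k ∈ Finset.Icc 1 n, |h k|) + μ := by
            gcongr
            · calc |∑ k ∈ Finset.Icc 1 n, h k * v (n - k)|
                  ≤ ∑ k ∈ Finset.Icc 1 n, |h k * v (n - k)| :=
                    Finset.abs_sum_le_sum_abs _ _
                _ ≤ ∑ k ∈ Finset.Icc 1 n, |h k| := by
                    apply Finset.sum_le_sum
                    intro k hk
                    rw [abs_mul]
                    have hk1 : 1 ≤ k := (Finset.mem_Icc.mp hk).1
                    have hkn : k ≤ n := (Finset.mem_Icc.mp hk).2
                    have : |v (n - k)| ≤ 1 := ih (n - k) (by omega)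
                    nlinarith [abs_nonneg (h k)]
            · exact ha n
        _ ≤ (∑' k : ℕ, |h (k + 1)|) + μ := by
            gcongr
            have : (∑ k ∈ Finset.Icc 1 n, |h k|)
                = ∑ k ∈ Finset.range n, |h (k + 1)| := by
              rw [show Finset.Icc 1 n = Finset.Ico 1 (n + 1) by
                    rw [Finset.Ico_add_one_right_eq_Icc],
                  Finset.sum_Ico_eq_sum_range]
              simp [Nat.add_comm]
            rw [this]
            exact Summable.sum_le_tsum _ (fun i _ => abs_nonneg _) hsum
        _ ≤ 2 := by linarith
    rw [hv n, hq n]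
    rw [abs_le] at hwbound ⊢
    split <;> constructor <;> (try linarith) <;> linarith
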